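/- For a given space group S with point group P₀, the set of black and white magnetic space groups G of type (c-i) whose associated space group is S is in one-to-one correspondence with the set of nonzero elements of H¹(P₀; ℤ₂) = Hom(P₀, ℤ₂) \ {0}: namely, each nontrivial homomorphism ρ_P : P₀ → ℤ₂ determines G := ker(ρ_S · pr_{ℤ₂}) where ρ_S is the composite S → P₀ → ℤ₂, and this correspondence is bijective. -/

import Mathlib

noncomputable section

/-- The `d`-dimensional Euclidean space `V = ℝ^d`. -/
abbrev Euclid (d : ℕ) := EuclideanSpace ℝ (Fin d)

/-- The Euclidean motion group `Euc(V)`, i.e. the isometry group of `V`. -/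
abbrev Euc (d : ℕ) := Euclid d ≃ᵢ Euclid d

/-- The group `ℤ₂` (written multiplicatively). -/
abbrev C2 := Multiplicative (ZMod 2)

/-- An isometry of `V` is a translation if it is of the form `x ↦ x + v`. -/
def IsTranslation {d : ℕ} (e : Euc d) : Prop := ∀ x, e x = x + e 0

/-- A full-rank lattice in `V`: a discrete additive subgroup whose real span is all of `V`. -/
def IsFullLattice {d : ℕ} (L : AddSubgroup (Euclid d)) : Prop :=
  DiscreteTopology L ∧ Submodule.span ℝ (L : Set (Euclid d)) = ⊤

/-- The subgroup of translations in the Euclidean motion group. -/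
def transSubgroup (d : ℕ) : Subgroup (Euc d) where
  carrier := {e | IsTranslation e}
  one_mem' := by intro x; simp
  mul_mem' := by
    intro e f he hf x
    have h1 : (e * f) x = e (f x) := rfl
    have h2 : (e * f) 0 = e (f 0) := rfl
    rw [h1, h2, hf x, he (x + f 0), he (f 0)]
    abel
  inv_mem' := by
    intro e he x
    have key : ∀ y, e⁻¹ y = y - e 0 := by
      intro y
      have : e (y - e 0) = y := by rw [he (y - e 0)]; abel
      calc e⁻¹ y = e⁻¹ (e (y - e 0)) := by rw [this]
        _ = y - e 0 := e.symm_apply_apply _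
    have h0 : e⁻¹ (0 : Euclid d) = -e 0 := by rw [key 0]; abel
    show e⁻¹ x = x + e⁻¹ 0
    rw [key x, h0]; abel

/-- The lattice of translation vectors contained in a subgroup `S ⊆ Euc(V)`. -/
def transLat {d : ℕ} (S : Subgroup (Euc d)) : AddSubgroup (Euclid d) where
  carrier := {v | ∃ e ∈ S, IsTranslation e ∧ e 0 = v}
  zero_mem' := ⟨1, S.one_mem, (transSubgroup d).one_mem, by simp⟩
  add_mem' := by
    rintro a b ⟨e, heS, he, rfl⟩ ⟨f, hfS, hf, rfl⟩
    refine ⟨e * f, S.mul_mem heS hfS, (transSubgroup d).mul_mem he hf, ?_⟩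
    show e (f 0) = e 0 + f 0
    rw [hf 0, he (0 + f 0)]; abel
  neg_mem' := by
    rintro a ⟨e, heS, he, rfl⟩
    refine ⟨e⁻¹, S.inv_mem heS, (transSubgroup d).inv_mem he, ?_⟩
    have h1 : e (e⁻¹ 0) = (e⁻¹ 0) + e 0 := he (e⁻¹ 0)
    have h2 : e (e⁻¹ 0) = 0 := e.apply_symm_apply 0
    have h3 : (0 : Euclid d) = e⁻¹ 0 + e 0 := by rw [← h1, h2]
    show e⁻¹ 0 = -(e 0)
    have := congrArg (fun y => y - e 0) h3
    simpa using this.symm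

/-- The lattice of translation vectors `Π = G ∩ (ℝ^d × {1})` of a subgroup
`G ⊆ Euc(V) × ℤ₂`. -/
def magLat {d : ℕ} (G : Subgroup (Euc d × C2)) : AddSubgroup (Euclid d) :=
  transLat (G.comap (MonoidHom.inl (Euc d) C2))

/-- A crystallographic space group: `S ∩ ℝ^d` is a full-rank lattice of translations and
the point group `S/(S ∩ ℝ^d)` is finite. -/
def IsSpaceGroup {d : ℕ} (S : Subgroup (Euc d)) : Prop :=
  IsFullLattice (transLat S) ∧ (transSubgroup d).relIndex S ≠ 0

/-- A magnetic space group: `Π = G ∩ (ℝ^d × {1})` is a full-rank lattice of translations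
and the magnetic point group `P = G/Π` is finite. -/
def IsMagneticSpaceGroup {d : ℕ} (G : Subgroup (Euc d × C2)) : Prop :=
  IsFullLattice (magLat G) ∧ ((transSubgroup d).prod ⊥).relIndex G ≠ 0


/-- The subgroup of translations of a space group `S`, as a subgroup of `S`. -/
def TS {d : ℕ} (S : Subgroup (Euc d)) : Subgroup S :=
  Subgroup.comap S.subtype (transSubgroup d)

/-- A black and white magnetic space group of type (c-i) with associated space group `S`:
a subgroup `G ⊆ S × ℤ₂` projecting onto `S`, containing `Π_S × {1}`, with nontrivial
time-reversal indicator, injective first projection (`ρ_{ℤ₂} = id`), and with the same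
translation lattice as `S` (every translation in `G` is time-preserving). -/
def IsTypeCi {d : ℕ} (S : Subgroup (Euc d)) (G : Subgroup (Euc d × C2)) : Prop :=
  (G.map (MonoidHom.fst (Euc d) C2) = S) ∧
  (∀ e : Euc d, e ∈ S → IsTranslation e → ((e, (1 : C2)) ∈ G)) ∧
  (∃ g ∈ G, (g : Euc d × C2).2 ≠ 1) ∧
  (((1 : Euc d), (Multiplicative.ofAdd (1 : ZMod 2))) ∉ G) ∧
  (∀ (e : Euc d) (u : C2), IsTranslation e → (e, u) ∈ G → u = 1)

namespace Stmt4Aux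

lemma C2_cases (u : C2) : u = 1 ∨ u = Multiplicative.ofAdd (1 : ZMod 2) := by
  revert u; decide

lemma C2_ne : (Multiplicative.ofAdd (1 : ZMod 2)) ≠ (1 : C2) := by decide

variable {d : ℕ} (S : Subgroup (Euc d)) [hn : (TS S).Normal]

/-- The graph homomorphism `S →* Euc d × C2` of a homomorphism on the point group. -/
def phi (ρ : (S ⧸ TS S) →* C2) : S →* Euc d × C2 :=
  S.subtype.prod (ρ.comp (QuotientGroup.mk' (TS S)))

/-- The magnetic group determined by `ρ`. -/
def Grho (ρ : (S ⧸ TS S) →* C2) : Subgroup (Euc d × C2) := (phi S ρ).range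

lemma mem_Grho (ρ : (S ⧸ TS S) →* C2) (x : Euc d × C2) :
    x ∈ Grho S ρ ↔ ∃ s : S, x = ((s : Euc d), ρ (QuotientGroup.mk s)) := by
  constructor
  · rintro ⟨s, rfl⟩; exact ⟨s, rfl⟩
  · rintro ⟨s, rfl⟩; exact ⟨s, rfl⟩

variable {S}

lemma rho_trans {ρ : (S ⧸ TS S) →* C2} {s : S} (hs : IsTranslation (s : Euc d)) :
    ρ (QuotientGroup.mk s) = 1 := by
  have h1 : (QuotientGroup.mk s : S ⧸ TS S) = 1 := (QuotientGroup.eq_one_iff s).mpr hs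
  rw [h1, map_one]

lemma typeCi_Grho {ρ : (S ⧸ TS S) →* C2} (hρ : ρ ≠ 1) : IsTypeCi S (Grho S ρ) := by
  refine ⟨?_, ?_, ?_, ?_, ?_⟩
  · ext e
    rw [Subgroup.mem_map]
    constructor
    · rintro ⟨x, hx, rfl⟩
      rw [mem_Grho] at hx
      obtain ⟨s, rfl⟩ := hx
      exact s.2
    · intro he
      refine ⟨(((⟨e, he⟩ : S) : Euc d), ρ (QuotientGroup.mk ⟨e, he⟩)), ?_, rfl⟩
      rw [mem_Grho]; exact ⟨⟨e, he⟩, rfl⟩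
  · intro e he ht
    rw [mem_Grho]
    exact ⟨⟨e, he⟩, by rw [rho_trans ht]⟩
  · have hq : ∃ q : S ⧸ TS S, ρ q ≠ 1 := by
      by_contra h
      push_neg at h
      exact hρ (MonoidHom.ext h)
    obtain ⟨q, hq⟩ := hq
    obtain ⟨s, rfl⟩ := QuotientGroup.mk_surjective q
    exact ⟨((s : Euc d), ρ (QuotientGroup.mk s)), (mem_Grho S ρ _).mpr ⟨s, rfl⟩, hq⟩
  · intro h
    rw [mem_Grho] at h
    obtain ⟨s, hs⟩ := h
    have h1 : (s : Euc d) = 1 := (congrArg Prod.fst hs).symm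
    have hs1 : s = 1 := Subtype.ext h1
    have h2 := congrArg Prod.snd hs
    rw [hs1] at h2
    simp only [QuotientGroup.mk_one, map_one] at h2
    exact C2_ne h2
  · intro e u ht hm
    rw [mem_Grho] at hm
    obtain ⟨s, hs⟩ := hm
    have h1 : e = (s : Euc d) := congrArg Prod.fst hs
    have h2 : u = ρ (QuotientGroup.mk s) := congrArg Prod.snd hs
    rw [h2, rho_trans (h1 ▸ ht)]

variable {G : Subgroup (Euc d × C2)}

lemma snd_unique (hG : IsTypeCi S G) {e : Euc d} {u u' : C2}
    (h1 : (e, u) ∈ G) (h2 : (e, u') ∈ G) : u = u' := by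
  have hm : ((e, u)⁻¹ * (e, u') : Euc d × C2) ∈ G := G.mul_mem (G.inv_mem h1) h2
  have he : ((e, u)⁻¹ * (e, u') : Euc d × C2) = (1, u⁻¹ * u') := by
    simp [Prod.ext_iff]
  rw [he] at hm
  rcases C2_cases (u⁻¹ * u') with h | h
  · exact inv_mul_eq_one.mp h
  · rw [h] at hm
    exact absurd hm hG.2.2.2.1

lemma exists_snd (hG : IsTypeCi S G) (s : S) : ∃ u : C2, ((s : Euc d), u) ∈ G := by
  have h1 : (s : Euc d) ∈ G.map (MonoidHom.fst (Euc d) C2) := hG.1 ▸ s.2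
  rw [Subgroup.mem_map] at h1
  obtain ⟨x, hx, hx1⟩ := h1
  exact ⟨x.2, by rw [← hx1]; simpa using hx⟩

/-- The homomorphism `S →* C2` determined by `G`. -/
noncomputable def rhoS (hG : IsTypeCi S G) : S →* C2 where
  toFun s := (exists_snd hG s).choose
  map_one' := by
    have h1 := (exists_snd hG 1).choose_spec
    have h2 : (((1 : S) : Euc d), (1 : C2)) ∈ G := by exact G.one_mem
    exact snd_unique hG h1 h2
  map_mul' s t := by
    have hs := (exists_snd hG s).choose_spec
    have ht := (exists_snd hG t).choose_spec
    have hst := (exists_snd hG (s * t)).choose_spec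
    have hm : (((s * t : S) : Euc d),
        (exists_snd hG s).choose * (exists_snd hG t).choose) ∈ G := by
      have := G.mul_mem hs ht
      simpa using this
    exact snd_unique hG hst hm

lemma rhoS_spec (hG : IsTypeCi S G) (s : S) : ((s : Euc d), rhoS hG s) ∈ G :=
  (exists_snd hG s).choose_spec

lemma rhoS_eq (hG : IsTypeCi S G) {e : Euc d} {u : C2} (he : e ∈ S) (h : (e, u) ∈ G) :
    rhoS hG ⟨e, he⟩ = u := snd_unique hG (rhoS_spec hG ⟨e, he⟩) h

lemma rhoS_trans (hG : IsTypeCi S G) (s : S) (hs : s ∈ TS S) : rhoS hG s = 1 :=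
  hG.2.2.2.2 (s : Euc d) _ hs (rhoS_spec hG s)

/-- The point-group homomorphism determined by `G`. -/
noncomputable def rhoP (hG : IsTypeCi S G) : (S ⧸ TS S) →* C2 :=
  QuotientGroup.lift (TS S) (rhoS hG) (rhoS_trans hG)

lemma rhoP_mk (hG : IsTypeCi S G) (s : S) :
    rhoP hG (QuotientGroup.mk s) = rhoS hG s := rfl

lemma rhoP_ne (hG : IsTypeCi S G) : rhoP hG ≠ 1 := by
  intro h
  obtain ⟨g, hg, hg2⟩ := hG.2.2.1
  have h1 : g.1 ∈ S := by
    rw [← hG.1]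
    exact ⟨g, hg, rfl⟩
  have h2 : (g.1, g.2) ∈ G := by rwa [Prod.mk.eta]
  have h3 := rhoS_eq hG h1 h2
  rw [show rhoS hG ⟨g.1, h1⟩ = rhoP hG (QuotientGroup.mk ⟨g.1, h1⟩) from rfl, h] at h3
  exact hg2 h3.symm

lemma Grho_rhoP (hG : IsTypeCi S G) : Grho S (rhoP hG) = G := by
  ext x
  rw [mem_Grho]
  constructor
  · rintro ⟨s, rfl⟩
    exact rhoS_spec hG s
  · intro hx
    have h1 : x.1 ∈ S := by
      rw [← hG.1]
      exact ⟨x, hx, rfl⟩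
    refine ⟨⟨x.1, h1⟩, ?_⟩
    have h2 : (x.1, x.2) ∈ G := by rwa [Prod.mk.eta]
    have h3 := rhoS_eq hG h1 h2
    rw [rhoP_mk, h3, Prod.mk.eta]

lemma rhoP_Grho (ρ : (S ⧸ TS S) →* C2) (hρ : ρ ≠ 1) :
    rhoP (typeCi_Grho hρ) = ρ := by
  apply QuotientGroup.monoidHom_ext
  ext s
  have h : ((s : Euc d), ρ (QuotientGroup.mk s)) ∈ Grho S ρ :=
    (mem_Grho S ρ _).mpr ⟨s, rfl⟩
  have h2 := rhoS_eq (typeCi_Grho hρ) s.2 h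
  simpa [rhoP_mk] using h2

end Stmt4Aux

/-- For a given space group `S` with point group `P₀ = S/Π_S`,
the set of black and white magnetic space groups of type (c-i) with associated space
group `S` is in one-to-one correspondence with `Hom(P₀, ℤ₂) \ {0}`: each nontrivial
homomorphism `ρ_P : P₀ → ℤ₂` determines `G = {(s, ρ_P(sΠ_S)) : s ∈ S}`, and this
correspondence is bijective. -/
theorem stmt_4 {d : ℕ} (S : Subgroup (Euc d)) (hS : IsSpaceGroup S)
    [hn : (TS S).Normal] :
    ∃ F : {ρP : (S ⧸ TS S) →* C2 // ρP ≠ 1} ≃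
          {G : Subgroup (Euc d × C2) // IsTypeCi S G},
      ∀ (ρP : {ρP : (S ⧸ TS S) →* C2 // ρP ≠ 1}) (x : Euc d × C2),
        x ∈ (F ρP : Subgroup (Euc d × C2)) ↔
          ∃ s : S, x = ((s : Euc d), (ρP : (S ⧸ TS S) →* C2) (QuotientGroup.mk s)) := by
  refine ⟨{
    toFun := fun ρ => ⟨Stmt4Aux.Grho S ρ.1, Stmt4Aux.typeCi_Grho ρ.2⟩
    invFun := fun G => ⟨Stmt4Aux.rhoP G.2, Stmt4Aux.rhoP_ne G.2⟩
    left_inv := fun ρ => Subtype.ext (Stmt4Aux.rhoP_Grho ρ.1 ρ.2)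
    right_inv := fun G => Subtype.ext (Stmt4Aux.Grho_rhoP G.2) }, ?_⟩
  intro ρP x
  exact Stmt4Aux.mem_Grho S ρP.1 x
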